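/- arXiv:2005.10018 — 2 statements merged into one kernel-verified Lean document; each statement's English description precedes it below -/
import Mathlib

section
/- Let φ(x) = (exp(x)−1−x)/x^2 for x ≠ 0 and φ(0)=1/2. Let X = p·Bern(q) with p>0, 0<q<1. Then ∑_{k≥2} (t^k/k!)·E[|X−E[X]|^k] = t^2·Var[X]·(q·φ(t p q) + (1−q)·φ(t p (1−q))), where Var[X] = p^2 q (1−q). -/
open MeasureTheory
noncomputable def phi (x : ℝ) : ℝ :=
  if x = 0 then 1 / 2 else (Real.exp x - 1 - x) / x ^ 2

lemma real_exp_tsum (x:ℝ) : Real.exp x = ∑' n:ℕ, x^n / n.factorial := by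
  rw [Real.exp_eq_exp_ℝ, NormedSpace.exp_eq_tsum_div]

lemma summable_tail (x : ℝ) : Summable (fun k : ℕ => x^(k+2)/((k+2).factorial : ℝ)) := by
  have := Real.summable_pow_div_factorial x
  exact (summable_nat_add_iff 2).mpr this

lemma exp_tail (x : ℝ) : ∑' k : ℕ, x^(k+2)/((k+2).factorial : ℝ) = x^2 * phi x := by
  have hs := Real.summable_pow_div_factorial x
  have h0 : Real.exp x = x^0/(0:ℕ).factorial + (x^1/(1:ℕ).factorial + ∑' k:ℕ, x^(k+2)/((k+2).factorial:ℝ)) := by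
    rw [real_exp_tsum, Summable.tsum_eq_zero_add hs]
    congr 1
    have := Summable.tsum_eq_zero_add ((summable_nat_add_iff 1).mpr hs)
    simpa using this
  have : ∑' k:ℕ, x^(k+2)/((k+2).factorial:ℝ) = Real.exp x - 1 - x := by
    simp at h0; linarith
  rw [this]
  unfold phi
  by_cases hx : x = 0
  · simp [hx]
  · rw [if_neg hx]; field_simp
lemma bern_integral
    {Ω : Type*} [MeasurableSpace Ω] (μ : Measure Ω) [IsProbabilityMeasure μ]
    (X : Ω → ℝ) (hX : Measurable X) (p q : ℝ) (hp : 0 < p) (hq0 : 0 < q) (hq1 : q < 1)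
    (hval : ∀ ω, X ω = p ∨ X ω = 0)
    (hlaw : μ {ω | X ω = p} = ENNReal.ofReal q) (n : ℕ) :
    ∫ ω, |X ω - p * q| ^ n ∂μ = q * (p*(1-q))^n + (1-q)*(p*q)^n := by
  set A : Set Ω := X ⁻¹' {p} with hA
  have hAm : MeasurableSet A := hX (measurableSet_singleton p)
  have hAq : μ A = ENNReal.ofReal q := hlaw
  have hAc : μ Aᶜ = ENNReal.ofReal (1 - q) := by
    rw [measure_compl hAm (measure_ne_top μ A), hAq, measure_univ,
      ← ENNReal.ofReal_one, ← ENNReal.ofReal_sub _ hq0.le]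
  have hfun : (fun ω => |X ω - p * q| ^ n) =
      fun ω => A.indicator (fun _ => (p*(1-q))^n) ω + Aᶜ.indicator (fun _ => (p*q)^n) ω := by
    funext ω
    by_cases h : ω ∈ A
    · have hx : X ω = p := h
      rw [Set.indicator_of_mem h, Set.indicator_of_notMem (by simp [h]), add_zero, hx]
      rw [abs_of_nonneg (by nlinarith)]
      ring_nf
    · have hx : X ω = 0 := (hval ω).resolve_left h
      rw [Set.indicator_of_notMem h, Set.indicator_of_mem (by simp [h]), zero_add, hx]
      rw [abs_of_nonpos (by nlinarith), neg_sub]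
      ring_nf
  rw [hfun, integral_add ((integrable_const _).indicator hAm)
      ((integrable_const _).indicator hAm.compl),
    integral_indicator_const _ hAm, integral_indicator_const _ hAm.compl, measureReal_def, measureReal_def, hAq, hAc,
    ENNReal.toReal_ofReal hq0.le, ENNReal.toReal_ofReal (by linarith)]
  simp only [smul_eq_mul]

/-- For `X = p·Bern(q)`,
`∑_{k≥2} (t^k/k!) E[|X−E[X]|^k] = t² Var[X] (q φ(tpq) + (1−q) φ(tp(1−q)))`. -/
theorem central_moment_series_scaled_bernoulli
    {Ω : Type*} [MeasurableSpace Ω] (μ : Measure Ω) [IsProbabilityMeasure μ]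
    (X : Ω → ℝ) (hX : Measurable X) (p q t : ℝ) (hp : 0 < p) (hq0 : 0 < q) (hq1 : q < 1)
    (hval : ∀ ω, X ω = p ∨ X ω = 0)
    (hlaw : μ {ω | X ω = p} = ENNReal.ofReal q) :
    ∑' k : ℕ, t ^ (k + 2) / (Nat.factorial (k + 2) : ℝ) *
        ∫ ω, |X ω - p * q| ^ (k + 2) ∂μ =
      t ^ 2 * (p ^ 2 * q * (1 - q)) *
        (q * phi (t * p * q) + (1 - q) * phi (t * p * (1 - q))) := by
  have hterm : ∀ k : ℕ, t ^ (k + 2) / (Nat.factorial (k + 2) : ℝ) *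
      ∫ ω, |X ω - p * q| ^ (k + 2) ∂μ =
      q * ((t*(p*(1-q)))^(k+2)/((k+2).factorial : ℝ)) +
      (1-q) * ((t*(p*q))^(k+2)/((k+2).factorial : ℝ)) := by
    intro k
    rw [bern_integral μ X hX p q hp hq0 hq1 hval hlaw (k+2), mul_pow t, mul_pow t]
    ring
  rw [tsum_congr hterm,
    Summable.tsum_add ((summable_tail _).mul_left _) ((summable_tail _).mul_left _),
    tsum_mul_left, tsum_mul_left, exp_tail, exp_tail]
  have h1 : t * (p * q) = t * p * q := by ring
  have h2 : t * (p * (1-q)) = t * p * (1-q) := by ring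
  rw [h1, h2]
  ring
end

section
/- Let p_i ≥ 0 with ∑_i p_i = 1, q_i = (1−p_i)^n, and θ_i = q_i φ(t p_i q_i) + (1−q_i) φ(t p_i (1−q_i)) with φ(x) = (e^x − 1 − x)/x^2. Then for t > 0, 2∑_i θ_i p_i^2 q_i (1−q_i) ≤ 2 t^{−2} ∑_{r≥2} (t/n)^r · E[K_r(n)], where E[K_r(n)] = ∑_i e^{−n p_i} (n p_i)^r / r!. -/
lemma summable_aux (x : ℝ) (hx : 0 ≤ x) :
    Summable (fun k : ℕ => x ^ k / (Nat.factorial (k + 2) : ℝ)) := by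
  refine Summable.of_nonneg_of_le (fun k => by positivity)
    (fun k => ?_) (Real.summable_pow_div_factorial x)
  apply div_le_div_of_nonneg_left (by positivity) (by positivity)
  exact_mod_cast Nat.factorial_le (by omega)

lemma series2 (x : ℝ) (hx : 0 ≤ x) :
    ∑' k : ℕ, x ^ (k + 2) / (Nat.factorial (k + 2) : ℝ) = Real.exp x - 1 - x := by
  have hs : Summable (fun k : ℕ => x ^ k / (Nat.factorial k : ℝ)) :=
    Real.summable_pow_div_factorial x
  have h0 : Real.exp x = ∑' k : ℕ, x ^ k / (Nat.factorial k : ℝ) := by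
    rw [Real.exp_eq_exp_ℝ, NormedSpace.exp_eq_tsum_div]
  have hs' : Summable (fun k : ℕ => x ^ (k + 1) / (Nat.factorial (k + 1) : ℝ)) :=
    (summable_nat_add_iff 1).mpr hs
  rw [h0, Summable.tsum_eq_zero_add hs, Summable.tsum_eq_zero_add hs']
  have h3 : (fun k : ℕ => x ^ (k + 1 + 1) / (Nat.factorial (k + 1 + 1) : ℝ))
      = fun k : ℕ => x ^ (k + 2) / (Nat.factorial (k + 2) : ℝ) := rfl
  rw [h3]
  simp [Nat.factorial]

lemma phi_eq (x : ℝ) (hx : 0 ≤ x) :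
    phi x = ∑' k : ℕ, x ^ k / (Nat.factorial (k + 2) : ℝ) := by
  by_cases h : x = 0
  · subst h
    rw [phi, if_pos rfl, tsum_eq_single 0 (fun b hb => by
      simp [zero_pow hb])]
    norm_num
  · rw [phi, if_neg h]
    have hx2 : x ^ 2 ≠ 0 := pow_ne_zero _ h
    rw [div_eq_iff hx2, ← series2 x hx, ← tsum_mul_right]
    congr 1
    ext k
    ring

lemma phi_mono {a b : ℝ} (ha : 0 ≤ a) (hab : a ≤ b) : phi a ≤ phi b := by
  rw [phi_eq a ha, phi_eq b (ha.trans hab)]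
  exact Summable.tsum_le_tsum (fun k => div_le_div_of_nonneg_right
    (pow_le_pow_left₀ ha hab k) (by positivity)) (summable_aux a ha)
    (summable_aux b (ha.trans hab))

lemma phi_nonneg {a : ℝ} (ha : 0 ≤ a) : 0 ≤ phi a := by
  rw [phi_eq a ha]
  exact tsum_nonneg fun k => by positivity

/-- poissonization bound on the variance proxy:
`2∑_i θ_i p_i² q_i (1−q_i) ≤ (2/t²) ∑_{r≥2} (t/n)^r E[K_r(n)]`
where `E[K_r(n)] = ∑_i e^{−n p_i} (n p_i)^r / r!`. -/
theorem poissonization_variance_proxy_bound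
    (m : ℕ) (p : Fin m → ℝ) (hp : ∀ i, 0 ≤ p i) (hsum : ∑ i, p i = 1)
    (n : ℕ) (hn : 1 ≤ n) (q : Fin m → ℝ) (hq : ∀ i, q i = (1 - p i) ^ n)
    (t : ℝ) (ht : 0 < t) (θ : Fin m → ℝ)
    (hθ : ∀ i, θ i = q i * phi (t * p i * q i) + (1 - q i) * phi (t * p i * (1 - q i))) :
    2 * ∑ i, θ i * (p i ^ 2 * q i * (1 - q i)) ≤
      (2 / t ^ 2) * ∑' r : ℕ, (t / n) ^ (r + 2) *
        ∑ i, Real.exp (-(n : ℝ) * p i) * ((n : ℝ) * p i) ^ (r + 2) /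
          (Nat.factorial (r + 2) : ℝ) := by
  have hn0 : (0:ℝ) < n := by exact_mod_cast hn
  have hp1 : ∀ i, p i ≤ 1 := by
    intro i
    rw [← hsum]
    exact Finset.single_le_sum (fun j _ => hp j) (Finset.mem_univ i)
  have hq0 : ∀ i, 0 ≤ q i := fun i => by
    rw [hq i]; exact pow_nonneg (by linarith [hp1 i]) n
  have hq1 : ∀ i, q i ≤ 1 := fun i => by
    rw [hq i]; exact pow_le_one₀ (by linarith [hp1 i]) (by linarith [hp i])
  have hqe : ∀ i, q i ≤ Real.exp (-(n : ℝ) * p i) := by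
    intro i
    rw [hq i]
    have h1 : 1 - p i ≤ Real.exp (-p i) := by
      have := Real.add_one_le_exp (-p i); linarith
    calc (1 - p i) ^ n ≤ Real.exp (-p i) ^ n :=
          pow_le_pow_left₀ (by linarith [hp1 i]) h1 n
      _ = Real.exp (-(n : ℝ) * p i) := by
          rw [← Real.exp_nat_mul]; ring_nf
  -- rewrite the RHS tsum
  have hsum_f : ∀ i, Summable (fun r : ℕ =>
      Real.exp (-(n : ℝ) * p i) * ((t * p i) ^ (r + 2) / (Nat.factorial (r + 2) : ℝ))) := by
    intro i
    apply Summable.mul_left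
    have hx : 0 ≤ t * p i := mul_nonneg ht.le (hp i)
    have := (summable_aux (t * p i) hx).mul_left ((t * p i) ^ 2)
    refine this.congr fun r => ?_
    rw [← mul_div_assoc, ← pow_add]
    ring_nf
  have hre : ∀ r : ℕ, (t / n) ^ (r + 2) *
        ∑ i, Real.exp (-(n : ℝ) * p i) * ((n : ℝ) * p i) ^ (r + 2) /
          (Nat.factorial (r + 2) : ℝ)
      = ∑ i, Real.exp (-(n : ℝ) * p i) * ((t * p i) ^ (r + 2) / (Nat.factorial (r + 2) : ℝ)) := by
    intro r
    rw [Finset.mul_sum]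
    refine Finset.sum_congr rfl fun i _ => ?_
    have : (t / n) ^ (r + 2) * ((n : ℝ) * p i) ^ (r + 2) = (t * p i) ^ (r + 2) := by
      rw [← mul_pow]
      congr 1
      field_simp
    rw [← this]
    ring
  have hR : ∑' r : ℕ, (t / n) ^ (r + 2) *
        ∑ i, Real.exp (-(n : ℝ) * p i) * ((n : ℝ) * p i) ^ (r + 2) /
          (Nat.factorial (r + 2) : ℝ)
      = ∑ i, Real.exp (-(n : ℝ) * p i) * (Real.exp (t * p i) - 1 - t * p i) := by
    rw [tsum_congr hre, Summable.tsum_finsetSum (fun i _ => hsum_f i)]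
    refine Finset.sum_congr rfl fun i _ => ?_
    rw [tsum_mul_left, series2 (t * p i) (mul_nonneg ht.le (hp i))]
  rw [hR, Finset.mul_sum, Finset.mul_sum]
  refine Finset.sum_le_sum fun i _ => ?_
  rcases eq_or_lt_of_le (hp i) with h0 | h0
  · simp [← h0]
  -- p i > 0 case
  have hx : 0 < t * p i := mul_pos ht h0
  have hxne : t * p i ≠ 0 := hx.ne'
  have hphix : Real.exp (t * p i) - 1 - t * p i = (t * p i) ^ 2 * phi (t * p i) := by
    rw [phi, if_neg hxne]
    field_simp
  have hθle : θ i ≤ phi (t * p i) := by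
    rw [hθ i]
    have h1 : phi (t * p i * q i) ≤ phi (t * p i) :=
      phi_mono (mul_nonneg hx.le (hq0 i)) (mul_le_of_le_one_right hx.le (hq1 i))
    have h2 : phi (t * p i * (1 - q i)) ≤ phi (t * p i) :=
      phi_mono (mul_nonneg hx.le (by linarith [hq1 i]))
        (mul_le_of_le_one_right hx.le (by linarith [hq0 i]))
    nlinarith [hq0 i, hq1 i]
  have hθ0 : 0 ≤ θ i := by
    rw [hθ i]
    have h1 := phi_nonneg (mul_nonneg hx.le (hq0 i))
    have h2 := phi_nonneg (mul_nonneg hx.le (by linarith [hq1 i] : (0:ℝ) ≤ 1 - q i))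
    nlinarith [hq0 i, hq1 i]
  have hqq : q i * (1 - q i) ≤ Real.exp (-(n : ℝ) * p i) := by
    nlinarith [hq0 i, hq1 i, hqe i]
  have hphi0 : 0 ≤ phi (t * p i) := phi_nonneg hx.le
  have hfin : 2 / t ^ 2 * (Real.exp (-(n:ℝ) * p i) * (Real.exp (t * p i) - 1 - t * p i))
      = 2 * (p i ^ 2 * phi (t * p i) * Real.exp (-(n:ℝ) * p i)) := by
    rw [hphix]
    field_simp
  rw [hfin]
  have key : θ i * (p i ^ 2 * q i * (1 - q i)) ≤ p i ^ 2 * phi (t * p i) * Real.exp (-(n:ℝ) * p i) := by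
    have e1 : θ i * (p i ^ 2 * q i * (1 - q i)) = (θ i * (q i * (1 - q i))) * p i ^ 2 := by ring
    have e2 : p i ^ 2 * phi (t * p i) * Real.exp (-(n:ℝ) * p i)
        = (phi (t * p i) * Real.exp (-(n:ℝ) * p i)) * p i ^ 2 := by ring
    rw [e1, e2]
    apply mul_le_mul_of_nonneg_right _ (sq_nonneg _)
    have hq01 : 0 ≤ q i * (1 - q i) := mul_nonneg (hq0 i) (by linarith [hq1 i])
    exact mul_le_mul hθle hqq hq01 hphi0
  nlinarith [key]
end
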